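/- Let q be an odd prime power, χ a nontrivial multiplicative character on F_q, and P(x) ∈ F_q[x] a polynomial with Σ_{x∈F_q} χ(xP(x)) = 0. Then the matrix M = [χ(P*(a,b))]_{a,b∈F_q*}, where P*(x,y) = x^{deg P}·P(y/x) is the homogenization of P, is singular. -/

import Mathlib

theorem stmt_10 (F : Type*) [Field F] [Fintype F] [DecidableEq F]
    (hodd : Odd (Fintype.card F)) (χ : MulChar F ℂ) (hχ : χ ≠ 1)
    (P : Polynomial F) (hsum : ∑ x : F, χ (x * P.eval x) = 0) :
    Matrix.det (Matrix.of fun a b : Fˣ =>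
        χ (∑ s ∈ Finset.range (P.natDegree + 1),
            P.coeff s * (a : F) ^ (P.natDegree - s) * (b : F) ^ s)) = 0 := by
  have h0 : ∑ x ∈ Finset.univ.erase (0 : F), χ (x * P.eval x)
      = ∑ b : Fˣ, χ ((b : F) * P.eval (b : F)) := by
    refine Finset.sum_nbij' (fun x => if h : x = 0 then 1 else Units.mk0 x h)
      (fun b : Fˣ => (b : F)) ?_ ?_ ?_ ?_ ?_
    · intro x hx; exact Finset.mem_univ _
    · intro b _; exact Finset.mem_erase.2 ⟨b.ne_zero, Finset.mem_univ _⟩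
    · intro x hx; simp only [dif_neg (Finset.ne_of_mem_erase hx), Units.val_mk0]
    · intro b _; simp only [dif_neg b.ne_zero]; exact Units.ext rfl
    · intro x hx; simp only [dif_neg (Finset.ne_of_mem_erase hx), Units.val_mk0]
  have hχ0 : χ (0 : F) = 0 := χ.map_nonunit (by simp)
  have hsum' : ∑ b : Fˣ, χ ((b : F) * P.eval (b : F)) = 0 := by
    rw [← h0, ← hsum,
      ← Finset.add_sum_erase Finset.univ _ (Finset.mem_univ (0 : F)),
      zero_mul, hχ0, zero_add]
  rw [← Matrix.exists_mulVec_eq_zero_iff]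
  refine ⟨fun b => χ (b : F), ?_, ?_⟩
  · intro h
    have := congrFun h 1
    simp [MulChar.map_one] at this
  · funext a
    show ∑ b : Fˣ, (Matrix.of _ : Matrix Fˣ Fˣ ℂ) a b * χ (b : F) = 0
    simp only [Matrix.of_apply]
    have ha : (a : F) ≠ 0 := a.ne_zero
    rw [Fintype.sum_equiv (Equiv.mulLeft a⁻¹) _
      (fun b => χ ((a : F)) ^ (P.natDegree + 1) * (χ (P.eval (b : F)) * χ (b : F)))]
    · rw [← Finset.mul_sum]
      have : ∑ b : Fˣ, χ (P.eval (b : F)) * χ (b : F) = 0 := by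
        rw [← hsum']
        exact Finset.sum_congr rfl fun b _ => by rw [← map_mul, mul_comm]
      rw [this, mul_zero]
    · intro b
      simp only [Equiv.coe_mulLeft, Units.val_mul]
      have hval : ((a⁻¹ : Fˣ) : F) = (a : F)⁻¹ := by
        rw [← Units.val_inv_eq_inv_val]
      rw [hval]
      have h1 : ∑ s ∈ Finset.range (P.natDegree + 1),
          P.coeff s * (a : F) ^ (P.natDegree - s) * (b : F) ^ s
          = (a : F) ^ P.natDegree * P.eval ((a : F)⁻¹ * (b : F)) := by
        rw [Polynomial.eval_eq_sum_range, Finset.mul_sum]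
        refine Finset.sum_congr rfl fun s hs => ?_
        have hsle : s ≤ P.natDegree := Nat.lt_succ_iff.1 (Finset.mem_range.1 hs)
        have key : (a : F) ^ P.natDegree * ((a : F)⁻¹ * (b : F)) ^ s
            = (a : F) ^ (P.natDegree - s) * (b : F) ^ s := by
          rw [mul_pow, inv_pow, ← Nat.sub_add_cancel hsle, pow_add]
          field_simp
          ring
          rw [Nat.add_sub_cancel]
        linear_combination (-(P.coeff s)) * key
      rw [h1, map_mul, map_pow, map_mul, pow_succ]
      have hinv : χ ((a : F)) * χ ((a : F)⁻¹) = 1 := by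
        rw [← map_mul, mul_inv_cancel₀ ha, map_one]
      linear_combination (-(χ ((a : F)) ^ P.natDegree *
        χ (P.eval ((a : F)⁻¹ * (b : F))) * χ ((b : F)))) * hinv
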